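/- Let k ≥ 3 be an integer. For every x ∈ (1/k, 1), ξ_1(x) ≥ (k/(k−1))·(1 + 1/log k)·ψ(x), where ξ_1(x) = (1/(k−1))·(−log x − (k−1)·log((1−x)/(k−1)) + k·(x·log x + (1−x)·log((1−x)/(k−1)))). (Equivalently, the 1-log-Sobolev constant α_1 of the Potts semigroup on [k] satisfies α_1 ≥ (k/(k−1))·(1 + 1/log k).) -/

import Mathlib

open scoped BigOperators

/-- `ψ(x) = log k + x log x + (1-x) log((1-x)/(k-1))`. -/
noncomputable def psi (k : ℕ) (x : ℝ) : ℝ :=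
  Real.log (k : ℝ) + x * Real.log x + (1 - x) * Real.log ((1 - x) / ((k : ℝ) - 1))

/-- `ξ_1(x)`. -/
noncomputable def xi1 (k : ℕ) (x : ℝ) : ℝ :=
  (1 / ((k : ℝ) - 1)) *
    (-Real.log x - ((k : ℝ) - 1) * Real.log ((1 - x) / ((k : ℝ) - 1))
      + (k : ℝ) * (x * Real.log x + (1 - x) * Real.log ((1 - x) / ((k : ℝ) - 1))))

/-- `log t ≥ 2(t-1)/(t+1)` for `t ≥ 1`. -/
lemma my_log_ge {t : ℝ} (ht : 1 ≤ t) : 2 * (t - 1) / (t + 1) ≤ Real.log t := by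
  have key : ∀ u : ℝ, 1 ≤ u → 0 ≤ (u + 1) * Real.log u - 2 * (u - 1) := by
    intro u hu
    set g : ℝ → ℝ := fun v => (v + 1) * Real.log v - 2 * (v - 1) with hg
    have hder : ∀ v : ℝ, 0 < v →
        HasDerivAt g (Real.log v + (v + 1) * v⁻¹ - 2) v := by
      intro v hv
      have h1 : HasDerivAt (fun w : ℝ => (w + 1) * Real.log w)
          (1 * Real.log v + (v + 1) * v⁻¹) v :=
        ((hasDerivAt_id v).add_const 1).mul (Real.hasDerivAt_log hv.ne')
      have h2 : HasDerivAt (fun w : ℝ => 2 * (w - 1)) 2 v := by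
        simpa using ((hasDerivAt_id v).sub_const 1).const_mul 2
      have h1' : HasDerivAt (fun w : ℝ => (w + 1) * Real.log w)
          (Real.log v + (v + 1) * v⁻¹) v := by simpa using h1
      exact h1'.sub h2
    have hmono : MonotoneOn g (Set.Ici 1) := by
      apply monotoneOn_of_deriv_nonneg (convex_Ici 1)
      · intro v hv
        have hv0 : (0:ℝ) < v := lt_of_lt_of_le one_pos hv
        exact (hder v hv0).continuousAt.continuousWithinAt
      · intro v hv
        rw [interior_Ici] at hv
        exact ((hder v (lt_trans one_pos hv)).differentiableAt).differentiableWithinAt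
      · intro v hv
        rw [interior_Ici] at hv
        have hv0 : (0:ℝ) < v := lt_trans one_pos hv
        rw [(hder v hv0).deriv]
        have hlog : 1 - v⁻¹ ≤ Real.log v := Real.one_sub_inv_le_log_of_pos hv0
        have : (v + 1) * v⁻¹ = 1 + v⁻¹ := by field_simp
        rw [this]
        linarith
    have h1 : g 1 = 0 := by simp [hg]
    have := hmono (Set.mem_Ici.2 le_rfl) (Set.mem_Ici.2 hu) hu
    rw [h1] at this
    simpa [hg] using this
  have h := key t ht
  rw [div_le_iff₀ (by linarith : (0:ℝ) < t + 1)]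
  linarith [h]

/-- key numeric lemma: `k·log(2·log k) ≥ 2·log k` for `k ≥ 3`. -/
lemma my_klog {K : ℝ} (hK : 3 ≤ K) : 2 * Real.log K ≤ K * Real.log (2 * Real.log K) := by
  set L := Real.log K with hLdef
  set e := Real.exp 1 with he
  have he1 : 2.7182818283 < e := Real.exp_one_gt_d9
  have he2 : e < 2.7182818286 := Real.exp_one_lt_d9
  have hlog3 : 2 - e / 3 ≤ Real.log 3 := by
    have h := Real.log_le_sub_one_of_pos (show (0:ℝ) < e / 3 by positivity)
    have : Real.log (e / 3) = 1 - Real.log 3 := by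
      rw [Real.log_div (by positivity) (by norm_num), Real.log_exp]
    linarith [this ▸ h]
  have hLlb : 2 - e / 3 ≤ L := le_trans hlog3 (Real.log_le_log (by norm_num) hK)
  have hL1 : 1 < L := by nlinarith
  have hLK : e * L ≤ K := by
    have hKpos : (0:ℝ) < K := by linarith
    have h := Real.log_le_sub_one_of_pos (show (0:ℝ) < K / e by positivity)
    have h2 : Real.log (K / e) = L - 1 := by
      rw [Real.log_div hKpos.ne' (by positivity), Real.log_exp]
    rw [h2] at h
    have hepos : (0:ℝ) < e := by positivity
    have h3 : L ≤ K / e := by linarith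
    rw [le_div_iff₀ hepos] at h3
    linarith [h3, mul_comm L e]
  have hepos : (0:ℝ) < e := by positivity
  have hC := my_log_ge (t := 2 * L) (by linarith)
  have hstep : 2 * L ≤ K * (2 * (2 * L - 1) / (2 * L + 1)) := by
    rw [mul_div_assoc', le_div_iff₀ (by linarith : (0:ℝ) < 2 * L + 1)]
    have hm : (1.04:ℝ) ≤ L * (2 * e - 2) - e := by
      have hmono : (2 - e / 3) * (2 * e - 2) ≤ L * (2 * e - 2) :=
        mul_le_mul_of_nonneg_right hLlb (by nlinarith)
      nlinarith [mul_pos (show (0:ℝ) < e - 2.7 by nlinarith) (show (0:ℝ) < 2.8 - e by nlinarith)]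
    have hm2 : 2 * K * 1.04 ≤ 2 * K * (L * (2 * e - 2) - e) :=
      mul_le_mul_of_nonneg_left hm (by linarith)
    have h7 : 0 ≤ (K - e * L) * L := mul_nonneg (by linarith) (by linarith)
    have hde : 0 ≤ (K * (2 * (2 * L - 1)) - 2 * L * (2 * L + 1)) * e := by nlinarith
    nlinarith [hde, hepos]
  refine hstep.trans ?_
  exact mul_le_mul_of_nonneg_left hC (by linarith)

/-- Key inequality: `K·z·log z ≤ log K·(z-1)·(z+K-1)` for `z ≥ 1`, `K ≥ 3`. -/
lemma my_key {K : ℝ} (hK : 3 ≤ K) {z : ℝ} (hz : 1 ≤ z) :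
    K * z * Real.log z ≤ Real.log K * (z - 1) * (z + K - 1) := by
  set L := Real.log K with hLdef
  have hL1 : 1 < L := by
    have : Real.log 3 ≤ L := Real.log_le_log (by norm_num) hK
    nlinarith [Real.exp_one_lt_d9, Real.log_le_sub_one_of_pos
      (show (0:ℝ) < Real.exp 1 / 3 by positivity),
      Real.log_div (Real.exp_ne_zero 1) (show (3:ℝ) ≠ 0 by norm_num), Real.log_exp 1]
  have hB := my_klog hK
  set F : ℝ → ℝ := fun z => L * (z - 1) * (z + K - 1) - K * (z * Real.log z) with hF
  have hder : ∀ v : ℝ, 0 < v →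
      HasDerivAt F (L * (1 * (v + K - 1) + (v - 1) * 1) - K * (Real.log v + 1)) v := by
    intro v hv
    have h1 : HasDerivAt (fun w : ℝ => L * (w - 1) * (w + K - 1))
        (L * (1 * (v + K - 1) + (v - 1) * 1)) v := by
      have h := (((hasDerivAt_id v).sub_const 1).mul ((hasDerivAt_id v).add_const (K - 1))).const_mul L
      refine (h.congr_deriv ?_).congr_of_eventuallyEq (Filter.Eventually.of_forall fun w => ?_)
      · simp only [id_eq]; ring
      · simp only [Pi.mul_apply, id_eq]; ring
    exact h1.sub ((Real.hasDerivAt_mul_log hv.ne').const_mul K)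
  have hmono : MonotoneOn F (Set.Ici 1) := by
    apply monotoneOn_of_deriv_nonneg (convex_Ici 1)
    · exact fun v hv => (hder v (lt_of_lt_of_le one_pos hv)).continuousAt.continuousWithinAt
    · intro v hv
      rw [interior_Ici] at hv
      exact ((hder v (lt_trans one_pos hv)).differentiableAt).differentiableWithinAt
    · intro v hv
      rw [interior_Ici] at hv
      have hv0 : (0:ℝ) < v := lt_trans one_pos hv
      rw [(hder v hv0).deriv]
      -- tangent bound: log v ≤ log (K/(2L)) + 2Lv/K - 1
      have hz0 : (0:ℝ) < K / (2 * L) := by positivity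
      have ht := Real.log_le_sub_one_of_pos (show (0:ℝ) < v / (K / (2 * L)) by positivity)
      have hlogdiv : Real.log (v / (K / (2 * L))) = Real.log v - (L - Real.log (2 * L)) := by
        rw [Real.log_div hv0.ne' hz0.ne', Real.log_div (by positivity) (by positivity), hLdef]
      rw [hlogdiv] at ht
      have hvK : v / (K / (2 * L)) = 2 * L * v / K := by
        field_simp
      rw [hvK] at ht
      have hKpos : (0:ℝ) < K := by linarith
      have ht2 : K * Real.log v ≤ K * (L - Real.log (2 * L)) + 2 * L * v - K := by
        have := mul_le_mul_of_nonneg_left ht hKpos.le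
        have hcan : K * (2 * L * v / K) = 2 * L * v := by field_simp
        nlinarith [this, hcan]
      nlinarith [hB]
  have h1 : F 1 = 0 := by simp [hF]
  have := hmono (Set.mem_Ici.2 le_rfl) (Set.mem_Ici.2 hz) hz
  rw [h1] at this
  simp only [hF] at this
  nlinarith [this]

lemma aux_f_nonneg {K : ℝ} (hK : 3 ≤ K) {x : ℝ} (hx1 : 1 / K < x) (hx2 : x < 1) :
    0 ≤ -Real.log x - (K - 1) * (Real.log (1 - x) - Real.log (K - 1)) - K * Real.log K
      - (K / Real.log K) * (Real.log K + x * Real.log x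
        + (1 - x) * (Real.log (1 - x) - Real.log (K - 1))) := by
  set L := Real.log K with hLdef
  set c := Real.log (K - 1) with hcdef
  have hKpos : (0:ℝ) < K := by linarith
  have hK1 : (0:ℝ) < K - 1 := by linarith
  have hL1 : 1 < L := by
    have : Real.log 3 ≤ L := Real.log_le_log (by norm_num) hK
    nlinarith [Real.exp_one_lt_d9, Real.log_le_sub_one_of_pos
      (show (0:ℝ) < Real.exp 1 / 3 by positivity),
      Real.log_div (Real.exp_ne_zero 1) (show (3:ℝ) ≠ 0 by norm_num), Real.log_exp 1]
  have hLpos : (0:ℝ) < L := by linarith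
  set f : ℝ → ℝ := fun s => -Real.log s - (K - 1) * (Real.log (1 - s) - c) - K * L
      - (K / L) * (L + s * Real.log s + (1 - s) * (Real.log (1 - s) - c)) with hf
  -- derivative
  have hder : ∀ t : ℝ, 0 < t → t < 1 →
      HasDerivAt f ((K * t - 1) / (t * (1 - t))
        - (K / L) * (Real.log t + c - Real.log (1 - t))) t := by
    intro t ht0 ht1
    have h1t : (0:ℝ) < 1 - t := by linarith
    have hlin : HasDerivAt (fun s : ℝ => 1 - s) (-1) t := by
      simpa using (hasDerivAt_id t).const_sub 1
    have h1 : HasDerivAt (fun s : ℝ => Real.log s) t⁻¹ t := Real.hasDerivAt_log ht0.ne'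
    have h2 : HasDerivAt (fun s : ℝ => Real.log (1 - s)) (-1 / (1 - t)) t :=
      hlin.log h1t.ne'
    have h3 : HasDerivAt (fun s : ℝ => s * Real.log s) (Real.log t + 1) t :=
      Real.hasDerivAt_mul_log ht0.ne'
    have h4 : HasDerivAt (fun s : ℝ => (1 - s) * (Real.log (1 - s) - c))
        ((-1) * (Real.log (1 - t) - c) + (1 - t) * (-1 / (1 - t))) t :=
      hlin.mul (h2.sub_const c)
    have hD := ((h1.neg.sub ((h2.sub_const c).const_mul (K - 1))).sub_const (K * L)).sub
      (((h3.const_add L).add h4).const_mul (K / L))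
    refine hD.congr_deriv ?_
    field_simp
    ring
  -- derivative nonneg on the interior
  have hderiv_nonneg : ∀ t : ℝ, 1 / K < t → t < 1 → 0 ≤ deriv f t := by
    intro t ht1 ht2
    have ht0 : (0:ℝ) < t := lt_trans (by positivity) ht1
    have h1t : (0:ℝ) < 1 - t := by linarith
    have hKt : 1 < K * t := by
      rw [div_lt_iff₀ hKpos] at ht1
      linarith [ht1]
    set z : ℝ := t * (K - 1) / (1 - t) with hz
    have hz1 : 1 ≤ z := by
      rw [hz, le_div_iff₀ h1t]
      nlinarith
    have hlz : Real.log z = Real.log t + c - Real.log (1 - t) := by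
      rw [hz, Real.log_div (mul_ne_zero ht0.ne' hK1.ne') h1t.ne',
        Real.log_mul ht0.ne' hK1.ne', hcdef]
    have hA := my_key hK hz1
    rw [← hLdef] at hA
    set A : ℝ := Real.log t + c - Real.log (1 - t) with hAdef
    have e1 : z * (1 - t) = t * (K - 1) := by rw [hz]; field_simp
    have e2 : (z - 1) * (1 - t) = K * t - 1 := by rw [hz]; field_simp; ring
    have e3 : (z + K - 1) * (1 - t) = K - 1 := by rw [hz]; field_simp; ring
    have h8 : (K * t * (1 - t) * A) * (K - 1) ≤ (L * (K * t - 1)) * (K - 1) := by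
      calc (K * t * (1 - t) * A) * (K - 1)
          = K * (t * (K - 1)) * A * (1 - t) := by ring
        _ = K * (z * (1 - t)) * Real.log z * (1 - t) := by rw [e1, hlz, hAdef]
        _ = (K * z * Real.log z) * (1 - t) ^ 2 := by ring
        _ ≤ (L * (z - 1) * (z + K - 1)) * (1 - t) ^ 2 :=
            mul_le_mul_of_nonneg_right hA (sq_nonneg _)
        _ = L * ((z - 1) * (1 - t)) * ((z + K - 1) * (1 - t)) := by ring
        _ = (L * (K * t - 1)) * (K - 1) := by rw [e2, e3]
    have hkey : K * t * (1 - t) * A ≤ L * (K * t - 1) := le_of_mul_le_mul_right h8 hK1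
    rw [(hder t ht0 ht2).deriv, sub_nonneg,
      show K / L * A = (K * A) / L from by ring,
      div_le_div_iff₀ hLpos (by positivity : (0:ℝ) < t * (1 - t))]
    nlinarith [hkey]
  -- value at 1/K is zero
  have hf0 : f (1 / K) = 0 := by
    have hl1 : Real.log (1 / K) = -L := by rw [one_div, Real.log_inv, hLdef]
    have hl2 : Real.log (1 - 1 / K) = c - L := by
      rw [show (1:ℝ) - 1 / K = (K - 1) / K from by field_simp,
        Real.log_div hK1.ne' hKpos.ne', hcdef, hLdef]
    rw [hf]
    simp only [hl1, hl2]
    field_simp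
    ring
  -- monotone
  have hmono : MonotoneOn f (Set.Icc (1 / K) x) := by
    apply monotoneOn_of_deriv_nonneg (convex_Icc _ _)
    · intro t ht
      have ht0 : (0:ℝ) < t := lt_of_lt_of_le (by positivity) ht.1
      have ht1 : t < 1 := lt_of_le_of_lt ht.2 hx2
      exact (hder t ht0 ht1).continuousAt.continuousWithinAt
    · intro t ht
      rw [interior_Icc] at ht
      have ht0 : (0:ℝ) < t := lt_trans (by positivity) ht.1
      have ht1 : t < 1 := lt_trans ht.2 hx2
      exact (hder t ht0 ht1).differentiableAt.differentiableWithinAt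
    · intro t ht
      rw [interior_Icc] at ht
      exact hderiv_nonneg t ht.1 (lt_trans ht.2 hx2)
  have hmem1 : (1 / K) ∈ Set.Icc (1 / K) x := ⟨le_rfl, hx1.le⟩
  have hmem2 : x ∈ Set.Icc (1 / K) x := ⟨hx1.le, le_rfl⟩
  have := hmono hmem1 hmem2 hx1.le
  rw [hf0] at this
  simpa [hf] using this

/-- Lower bound on the 1-log-Sobolev constant of the Potts semigroup:
`ξ_1(x) ≥ (k/(k−1))·(1 + 1/log k)·ψ(x)` for all `x ∈ (1/k, 1)` and `k ≥ 3`. -/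
theorem xi1_ge (k : ℕ) (hk : 3 ≤ k) (x : ℝ) (hx : x ∈ Set.Ioo (1 / (k : ℝ)) 1) :
    xi1 k x ≥ (k : ℝ) / ((k : ℝ) - 1) * (1 + 1 / Real.log (k : ℝ)) * psi k x := by
  set K : ℝ := (k : ℝ) with hKdef
  have hK : (3:ℝ) ≤ K := by rw [hKdef]; exact_mod_cast hk
  obtain ⟨hx1, hx2⟩ := hx
  have hKpos : (0:ℝ) < K := by linarith
  have hK1 : (0:ℝ) < K - 1 := by linarith
  have hx0 : (0:ℝ) < x := lt_trans (by positivity) hx1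
  have h1x : (0:ℝ) < 1 - x := by linarith
  have hL1 : 1 < Real.log K := by
    have : Real.log 3 ≤ Real.log K := Real.log_le_log (by norm_num) hK
    nlinarith [Real.exp_one_lt_d9, Real.log_le_sub_one_of_pos
      (show (0:ℝ) < Real.exp 1 / 3 by positivity),
      Real.log_div (Real.exp_ne_zero 1) (show (3:ℝ) ≠ 0 by norm_num), Real.log_exp 1]
  have hnn := aux_f_nonneg hK hx1 hx2
  have hlogdiv : Real.log ((1 - x) / (K - 1)) = Real.log (1 - x) - Real.log (K - 1) :=
    Real.log_div h1x.ne' hK1.ne'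
  rw [ge_iff_le, ← sub_nonneg]
  have heq : xi1 k x - K / (K - 1) * (1 + 1 / Real.log K) * psi k x
      = (-Real.log x - (K - 1) * (Real.log (1 - x) - Real.log (K - 1)) - K * Real.log K
        - (K / Real.log K) * (Real.log K + x * Real.log x
          + (1 - x) * (Real.log (1 - x) - Real.log (K - 1)))) / (K - 1) := by
    rw [xi1, psi, ← hKdef, hlogdiv]
    have hLne : Real.log K ≠ 0 := by linarith
    field_simp
    ring
  rw [heq]
  exact div_nonneg hnn (by linarith)
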